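/- Let X and Y be real Banach spaces and f : X → Y a locally Lipschitz map with a pseudo-Jacobian mapping Jf satisfying the strong chain rule condition on X. Fix y ∈ Y and x ∈ X. If Jf is regular at x and f(x) ≠ y, then λ_{F_y}(x) ≥ reg Jf(x) > 0. Consequently, if Jf is regular at x and λ_{F_y}(x) = 0, then f(x) = y. -/

import Mathlib

open Filter Topology Metric Set MeasureTheory

noncomputable section

variable {X Y : Type*} [NormedAddCommGroup X] [NormedSpace ℝ X]
  [NormedAddCommGroup Y] [NormedSpace ℝ Y]

/-- The upper right-hand Dini derivative of `φ` at `x` in the direction `v`. -/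
def diniPlus (φ : X → ℝ) (x v : X) : ℝ :=
  Filter.limsup (fun t : ℝ => (φ (x + t • v) - φ x) / t) (𝓝[>] (0 : ℝ))

/-- `J` is a pseudo-Jacobian of `f` at `x`. -/
def IsPseudoJacobianAt (f : X → Y) (x : X) (J : Set (X →L[ℝ] Y)) : Prop :=
  J.Nonempty ∧ ∀ (y' : StrongDual ℝ Y) (v : X),
    diniPlus (fun z => y' (f z)) x v ≤ sSup ((fun T : X →L[ℝ] Y => y' (T v)) '' J)

/-- The Clarke generalized directional derivative of `φ` at `x` in the direction `v`. -/
def clarkeDeriv (φ : X → ℝ) (x v : X) : ℝ :=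
  Filter.limsup (fun p : X × ℝ => (φ (p.1 + p.2 • v) - φ p.1) / p.2)
    ((𝓝 x) ×ˢ (𝓝[>] (0 : ℝ)))

/-- The Clarke subdifferential of `φ` at `x`. -/
def clarkeSubdiff (φ : X → ℝ) (x : X) : Set (StrongDual ℝ X) :=
  {x' | ∀ v : X, x' v ≤ clarkeDeriv φ x v}

/-- `λ_F(x)`, the minimal norm of elements of the Clarke subdifferential of `F` at `x`. -/
def lambdaF (F : X → ℝ) (x : X) : ℝ :=
  sInf ((fun w : StrongDual ℝ X => ‖w‖) '' clarkeSubdiff F x)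

/-- The Banach constant `C(T) = inf {‖T* y*‖ : ‖y*‖ = 1}`. -/
def banachC (T : X →L[ℝ] Y) : ℝ :=
  sInf ((fun y' : StrongDual ℝ Y => ‖y'.comp T‖) '' {y' | ‖y'‖ = 1})

/-- The dual Banach constant `C*(T) = inf {‖T u‖ : ‖u‖ = 1}`. -/
def banachCStar (T : X →L[ℝ] Y) : ℝ :=
  sInf ((fun u : X => ‖T u‖) '' {u : X | ‖u‖ = 1})

/-- `sur Jf(x) = sup_{r>0} inf {C(T) : T ∈ co Jf(B(x;r))}`. -/
def surJ (Jf : X → Set (X →L[ℝ] Y)) (x : X) : ℝ :=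
  sSup {c : ℝ | ∃ r > (0 : ℝ),
    c = sInf (banachC '' convexHull ℝ (⋃ z ∈ ball x r, Jf z))}

/-- `inj Jf(x) = sup_{r>0} inf {C*(T) : T ∈ co Jf(B(x;r))}`. -/
def injJ (Jf : X → Set (X →L[ℝ] Y)) (x : X) : ℝ :=
  sSup {c : ℝ | ∃ r > (0 : ℝ),
    c = sInf (banachCStar '' convexHull ℝ (⋃ z ∈ ball x r, Jf z))}

/-- `Δ F_y(x) = ∂‖·‖(f(x)-y) ∘ co̅(Jf(x))`. -/
def DeltaF (f : X → Y) (Jf : X → Set (X →L[ℝ] Y)) (y : Y) (x : X) :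
    Set (StrongDual ℝ X) :=
  {w | ∃ y' ∈ clarkeSubdiff (fun z : Y => ‖z‖) (f x - y),
      ∃ T ∈ closure (convexHull ℝ (Jf x)), w = ContinuousLinearMap.comp y' T}

/-- The chain rule condition for the pseudo-Jacobian mapping `Jf` of `f` on `U`. -/
def ChainRuleCond (f : X → Y) (Jf : X → Set (X →L[ℝ] Y)) (U : Set X) : Prop :=
  ∀ x ∈ U, ∀ y : Y, y ≠ f x →
    IsClosed (StrongDual.toWeakDual '' DeltaF f Jf y x) ∧
    Convex ℝ (DeltaF f Jf y x) ∧
    IsPseudoJacobianAt (fun z : X => ‖f z - y‖) x (DeltaF f Jf y x)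

/-- The strong chain rule condition: the chain rule condition, `f` locally Lipschitz,
and `Δ F_y(x)` contains the Clarke subdifferential of `F_y` at `x`. -/
def StrongChainRuleCond (f : X → Y) (Jf : X → Set (X →L[ℝ] Y)) (U : Set X) : Prop :=
  ChainRuleCond f Jf U ∧
  (∀ x ∈ U, ∃ K : NNReal, ∃ t ∈ 𝓝 x, LipschitzOnWith K f t) ∧
  ∀ x ∈ U, ∀ y : Y, y ≠ f x →
    clarkeSubdiff (fun z : X => ‖f z - y‖) x ⊆ DeltaF f Jf y x

/-- `Jf` is regular at `x₀`. -/
def RegularAt (Jf : X → Set (X →L[ℝ] Y)) (x₀ : X) : Prop :=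
  (∃ r > (0 : ℝ), ∀ T ∈ convexHull ℝ (⋃ z ∈ ball x₀ r, Jf z),
      ∃ e : X ≃L[ℝ] Y, (e : X →L[ℝ] Y) = T) ∧
  surJ Jf x₀ = injJ Jf x₀ ∧ 0 < surJ Jf x₀

/-- The regularity index `reg Jf(x₀)`. -/
def regJ (Jf : X → Set (X →L[ℝ] Y)) (x₀ : X) : ℝ := surJ Jf x₀

/-- `f` is open with linear rate around `x₀`. -/
def OpenWithLinearRateAt (f : X → Y) (x₀ : X) : Prop :=
  ∃ V ∈ 𝓝 x₀, ∃ α > (0 : ℝ), ∀ x ∈ V, ∀ r > (0 : ℝ), ball x r ⊆ V →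
    ball (f x) (α * r) ⊆ f '' ball x r

/-- `h` is a weight: continuous, nondecreasing, nonnegative on `[0,∞)`,
with `∫₀^∞ dρ/(1+h(ρ)) = ∞`. -/
def IsWeight (h : ℝ → ℝ) : Prop :=
  ContinuousOn h (Ici 0) ∧ MonotoneOn h (Ici 0) ∧ (∀ ρ ∈ Ici (0 : ℝ), 0 ≤ h ρ) ∧
  ∫⁻ ρ in Ioi (0 : ℝ), ENNReal.ofReal (1 / (1 + h ρ)) = ⊤

/-- The weighted Chang–Palais–Smale condition for `F` with respect to the weight `h`. -/
def ChangPS (F : X → ℝ) (h : ℝ → ℝ) : Prop :=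
  ∀ u : ℕ → X, (∃ M : ℝ, ∀ n, |F (u n)| ≤ M) →
    Tendsto (fun n => lambdaF F (u n) * (1 + h ‖u n‖)) atTop (𝓝 0) →
    ∃ φ : ℕ → ℕ, StrictMono φ ∧ ∃ z : X, Tendsto ((fun n => u n) ∘ φ) atTop (𝓝 z)

/-- The local Lipschitz constant of `g` at `y`. -/
def lipConstAt (g : Y → X) (y : Y) : ℝ :=
  sInf {c : ℝ | ∃ r > (0 : ℝ), c = sSup {q : ℝ | ∃ u ∈ ball y r, ∃ w ∈ ball y r,
    u ≠ w ∧ q = ‖g u - g w‖ / ‖u - w‖}}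

private lemma limsup_le_of_bounds' {α : Type*} {l : Filter α} [l.NeBot] {u : α → ℝ} {a b : ℝ}
    (hlow : ∀ᶠ x in l, b ≤ u x) (hup : ∀ᶠ x in l, u x ≤ a) : Filter.limsup u l ≤ a :=
  Filter.limsup_le_of_le (Filter.isCoboundedUnder_le_of_eventually_le l hlow) hup

private lemma limsup_add_le_real {α : Type*} {l : Filter α} [l.NeBot] {u v : α → ℝ}
    {Mu mu Mv mv : ℝ}
    (hu1 : ∀ᶠ x in l, u x ≤ Mu) (hu2 : ∀ᶠ x in l, mu ≤ u x)
    (hv1 : ∀ᶠ x in l, v x ≤ Mv) (hv2 : ∀ᶠ x in l, mv ≤ v x) :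
    Filter.limsup (fun x => u x + v x) l ≤ Filter.limsup u l + Filter.limsup v l := by
  refine le_of_forall_pos_le_add fun ε hε => ?_
  have h1 : ∀ᶠ x in l, u x < Filter.limsup u l + ε/2 :=
    Filter.eventually_lt_of_limsup_lt (by linarith) ⟨Mu, hu1⟩
  have h2 : ∀ᶠ x in l, v x < Filter.limsup v l + ε/2 :=
    Filter.eventually_lt_of_limsup_lt (by linarith) ⟨Mv, hv1⟩
  refine Filter.limsup_le_of_le (Filter.isCoboundedUnder_le_of_eventually_le l
    ((hu2.and hv2).mono fun x hx => add_le_add hx.1 hx.2)) ?_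
  filter_upwards [h1, h2] with x h1 h2
  linarith

private lemma limsup_const_mul_le_real {α : Type*} {l : Filter α} [l.NeBot] {u : α → ℝ}
    {c M m' : ℝ} (hc : 0 < c) (hub : ∀ᶠ x in l, u x ≤ M) (hlb : ∀ᶠ x in l, m' ≤ u x) :
    Filter.limsup (fun x => c * u x) l ≤ c * Filter.limsup u l := by
  refine le_of_forall_pos_le_add fun ε hε => ?_
  have h1 : ∀ᶠ x in l, u x < Filter.limsup u l + ε/c :=
    Filter.eventually_lt_of_limsup_lt (by have := div_pos hε hc; linarith) ⟨M, hub⟩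
  refine Filter.limsup_le_of_le (Filter.isCoboundedUnder_le_of_eventually_le l
    (hlb.mono fun x hx => mul_le_mul_of_nonneg_left hx hc.le)) ?_
  filter_upwards [h1] with x h1
  have : c * u x ≤ c * (Filter.limsup u l + ε/c) := mul_le_mul_of_nonneg_left h1.le hc.le
  calc c * u x ≤ c * Filter.limsup u l + c * (ε/c) := by rw [mul_add] at this; exact this
    _ = c * Filter.limsup u l + ε := by rw [mul_div_cancel₀ _ hc.ne']

private lemma limsup_comp_le_real {α β : Type*} {l₁ : Filter α} {l₂ : Filter β} [l₁.NeBot]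
    {m : α → β} (hm : Filter.Tendsto m l₁ l₂) {u : β → ℝ} {M c : ℝ}
    (hub : ∀ᶠ y in l₂, u y ≤ M) (hlb : ∀ᶠ x in l₁, c ≤ u (m x)) :
    Filter.limsup (fun x => u (m x)) l₁ ≤ Filter.limsup u l₂ := by
  have heq : Filter.limsup (fun x => u (m x)) l₁ = Filter.limsup u (Filter.map m l₁) := by
    rw [Filter.limsup, Filter.limsup, Filter.map_map]; rfl
  rw [heq]
  refine Filter.limsup_le_limsup_of_le hm ?_ ⟨M, hub⟩
  rw [Filter.IsCoboundedUnder, Filter.map_map]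
  exact Filter.isCoboundedUnder_le_of_eventually_le l₁ hlb


private lemma quot_abs_le {φ : X → ℝ} {x : X} {K : NNReal} {δ : ℝ} (hδ : 0 < δ)
    (hL : LipschitzOnWith K φ (ball x δ)) (v : X) :
    ∀ᶠ p : X × ℝ in (𝓝 x) ×ˢ (𝓝[>] (0:ℝ)),
      |(φ (p.1 + p.2 • v) - φ p.1) / p.2| ≤ (K : ℝ) * ‖v‖ := by
  have h1 : ∀ᶠ z in 𝓝 x, z ∈ ball x (δ/2) := ball_mem_nhds x (by positivity)
  have h2 : ∀ᶠ t in 𝓝[>] (0:ℝ), t ∈ Ioo 0 (δ/(2*(‖v‖+1))) :=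
    Ioo_mem_nhdsGT_of_mem ⟨le_rfl, by positivity⟩
  filter_upwards [h1.prod_inl _, h2.prod_inr _] with p hp1 hp2
  obtain ⟨ht0, ht1⟩ := hp2
  have hv1 : (0:ℝ) < ‖v‖ + 1 := by positivity
  have htv : p.2 * ‖v‖ < δ/2 := by
    have h3 : p.2 * (‖v‖ + 1) < δ/(2*(‖v‖+1)) * (‖v‖+1) :=
      mul_lt_mul_of_pos_right ht1 hv1
    have h4 : δ/(2*(‖v‖+1)) * (‖v‖+1) = δ/2 := by field_simp
    rw [h4] at h3
    nlinarith [norm_nonneg v]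
  have hmem1 : p.1 ∈ ball x δ := by
    rw [mem_ball] at hp1 ⊢; linarith [hp1]
  have hmem2 : p.1 + p.2 • v ∈ ball x δ := by
    rw [mem_ball, dist_eq_norm] at hp1 ⊢
    calc ‖p.1 + p.2 • v - x‖ ≤ ‖p.1 - x‖ + ‖p.2 • v‖ := by
          rw [add_sub_right_comm]; exact norm_add_le _ _
      _ = ‖p.1 - x‖ + p.2 * ‖v‖ := by rw [norm_smul, Real.norm_eq_abs, abs_of_pos ht0]
      _ < δ := by linarith
  have hd : |φ (p.1 + p.2 • v) - φ p.1| ≤ (K:ℝ) * (p.2 * ‖v‖) := by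
    have := hL.dist_le_mul _ hmem2 _ hmem1
    rw [Real.dist_eq, dist_eq_norm, add_sub_cancel_left, norm_smul, Real.norm_eq_abs,
      abs_of_pos ht0] at this
    exact this
  rw [abs_div, abs_of_pos ht0, div_le_iff₀ ht0]
  calc |φ (p.1 + p.2 • v) - φ p.1| ≤ (K:ℝ) * (p.2 * ‖v‖) := hd
    _ = (K:ℝ) * ‖v‖ * p.2 := by ring

private lemma clarke_sub_exists {φ : X → ℝ} {x : X}
    (hφ : ∃ K : NNReal, ∃ δ > (0:ℝ), LipschitzOnWith K φ (ball x δ)) :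
    (clarkeSubdiff φ x).Nonempty := by
  obtain ⟨K, δ, hδ, hL⟩ := hφ
  set L : Filter (X × ℝ) := (𝓝 x) ×ˢ (𝓝[>] (0:ℝ)) with hLdef
  set q : X → X × ℝ → ℝ := fun v p => (φ (p.1 + p.2 • v) - φ p.1) / p.2 with hq
  have hLne : L.NeBot := by rw [hLdef]; infer_instance
  have hb : ∀ v, ∀ᶠ p in L, |q v p| ≤ (K : ℝ) * ‖v‖ := fun v => quot_abs_le hδ hL v
  have hub : ∀ v, ∀ᶠ p in L, q v p ≤ (K : ℝ) * ‖v‖ := fun v =>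
    (hb v).mono fun p hp => (abs_le.mp hp).2
  have hlb : ∀ v, ∀ᶠ p in L, -((K : ℝ) * ‖v‖) ≤ q v p := fun v =>
    (hb v).mono fun p hp => (abs_le.mp hp).1
  have hcd : ∀ v, clarkeDeriv φ x v = Filter.limsup (q v) L := fun v => rfl
  set N : X → ℝ := fun v => clarkeDeriv φ x v with hN
  -- upper bound
  have hNle : ∀ v, N v ≤ (K : ℝ) * ‖v‖ := fun v => by
    show Filter.limsup (q v) L ≤ (K : ℝ) * ‖v‖
    exact limsup_le_of_bounds' (hlb v) (hub v)
  -- subadditivity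
  have hNadd : ∀ v w, N (v + w) ≤ N v + N w := by
    intro v w
    have hm : Filter.Tendsto (fun p : X × ℝ => (p.1 + p.2 • v, p.2)) L L := by
      apply Filter.Tendsto.prodMk
      · have h2 : Filter.Tendsto (fun p : X × ℝ => p.2 • v) L (𝓝 (0:X)) := by
          have := (tendsto_snd.mono_right (nhdsWithin_le_nhds :
            𝓝[>] (0:ℝ) ≤ 𝓝 0) : Filter.Tendsto (fun p : X × ℝ => p.2) L (𝓝 0)).smul_const v
          simpa using this
        have := (tendsto_fst : Filter.Tendsto (fun p : X × ℝ => p.1) L (𝓝 x)).add h2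
        simpa using this
      · exact tendsto_snd
    have hkey : ∀ p : X × ℝ, q (v + w) p = q w (p.1 + p.2 • v, p.2) + q v p := by
      intro p
      simp only [hq]
      rw [← add_div]
      congr 2
      · rw [smul_add]; abel
    have step1 : Filter.limsup (q (v+w)) L ≤
        Filter.limsup (fun p => q w (p.1 + p.2 • v, p.2)) L + Filter.limsup (q v) L := by
      have e : Filter.limsup (q (v+w)) L =
          Filter.limsup (fun p : X × ℝ => q w (p.1 + p.2 • v, p.2) + q v p) L := by
        congr 1; funext p; exact hkey p
      rw [e]
      exact limsup_add_le_real (hm.eventually ((hb w).mono fun p hp => (abs_le.mp hp).2))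
        (hm.eventually ((hb w).mono fun p hp => (abs_le.mp hp).1))
        (hub v) (hlb v)
    have step2 : Filter.limsup (fun p : X × ℝ => q w (p.1 + p.2 • v, p.2)) L ≤
        Filter.limsup (q w) L :=
      limsup_comp_le_real hm (hub w) (hm.eventually (hlb w))
    show Filter.limsup (q (v+w)) L ≤ Filter.limsup (q v) L + Filter.limsup (q w) L
    calc Filter.limsup (q (v+w)) L ≤ _ + _ := step1
      _ ≤ Filter.limsup (q w) L + Filter.limsup (q v) L := add_le_add_left step2 _
      _ = _ := add_comm _ _
  -- positive homogeneity (≤ direction)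
  have hNhom_le : ∀ c : ℝ, 0 < c → ∀ v, N (c • v) ≤ c * N v := by
    intro c hc v
    have hn : Filter.Tendsto (fun p : X × ℝ => (p.1, c * p.2)) L L := by
      apply Filter.Tendsto.prodMk tendsto_fst
      have hmul : Filter.Tendsto (fun t : ℝ => c * t) (𝓝[>] (0:ℝ)) (𝓝[>] (0:ℝ)) := by
        apply tendsto_nhdsWithin_of_tendsto_nhds_of_eventually_within
        · have := (tendsto_const_nhds.mul (Filter.tendsto_id.mono_left
            (nhdsWithin_le_nhds : 𝓝[>] (0:ℝ) ≤ 𝓝 0)) :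
            Filter.Tendsto (fun t : ℝ => c * t) (𝓝[>] (0:ℝ)) (𝓝 (c * 0)))
          simpa using this
        · filter_upwards [self_mem_nhdsWithin] with t ht
          exact mul_pos hc ht
      exact hmul.comp tendsto_snd
    have hkey : ∀ p : X × ℝ, q (c • v) p = c * q v (p.1, c * p.2) := by
      intro p
      simp only [hq]
      have h1 : p.2 • c • v = (c * p.2) • v := by rw [smul_smul, mul_comm]
      rw [h1]
      rcases eq_or_ne p.2 0 with h | h
      · simp [h]
      · field_simp
    have e : Filter.limsup (q (c • v)) L =
        Filter.limsup (fun p : X × ℝ => c * q v (p.1, c * p.2)) L := by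
      congr 1; funext p; exact hkey p
    have step1 : Filter.limsup (fun p : X × ℝ => c * q v (p.1, c * p.2)) L ≤
        c * Filter.limsup (fun p : X × ℝ => q v (p.1, c * p.2)) L :=
      limsup_const_mul_le_real hc (hn.eventually ((hb v).mono fun p hp => (abs_le.mp hp).2))
        (hn.eventually ((hb v).mono fun p hp => (abs_le.mp hp).1))
    have step2 : Filter.limsup (fun p : X × ℝ => q v (p.1, c * p.2)) L ≤
        Filter.limsup (q v) L :=
      limsup_comp_le_real hn (hub v) (hn.eventually (hlb v))
    show Filter.limsup (q (c • v)) L ≤ c * Filter.limsup (q v) L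
    rw [e]
    exact step1.trans (mul_le_mul_of_nonneg_left step2 hc.le)
  have hNhom : ∀ c : ℝ, 0 < c → ∀ v, N (c • v) = c * N v := by
    intro c hc v
    refine le_antisymm (hNhom_le c hc v) ?_
    have := hNhom_le c⁻¹ (inv_pos.mpr hc) (c • v)
    rw [inv_smul_smul₀ hc.ne'] at this
    calc c * N v ≤ c * (c⁻¹ * N (c • v)) := mul_le_mul_of_nonneg_left this hc.le
      _ = N (c • v) := by field_simp
  -- Hahn-Banach
  obtain ⟨g, -, hg⟩ := exists_extension_of_le_sublinear
    ⟨⊥, 0⟩ N hNhom hNadd (fun z => by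
      obtain ⟨z, hz⟩ := z
      simp only [Submodule.mem_bot] at hz
      subst hz
      show (0:ℝ) ≤ N 0
      have : N 0 = 0 := by
        rw [hN]
        show Filter.limsup (fun p : X × ℝ => (φ (p.1 + p.2 • (0:X)) - φ p.1) / p.2) L = 0
        have : (fun p : X × ℝ => (φ (p.1 + p.2 • (0:X)) - φ p.1) / p.2) = fun _ => (0:ℝ) := by
          funext p; simp
        rw [this, Filter.limsup_const]
      rw [this])
  have hgK : ∀ v, ‖g v‖ ≤ (K : ℝ) * ‖v‖ := by
    intro v
    rw [Real.norm_eq_abs, abs_le]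
    constructor
    · have := (hg (-v)).trans (hNle (-v))
      rw [map_neg, norm_neg] at this
      linarith
    · exact (hg v).trans (hNle v)
  refine ⟨LinearMap.mkContinuous g (K : ℝ) hgK, fun v => ?_⟩
  exact hg v



private lemma norm_quot_lb (z v : Y) :
    ∀ᶠ p : Y × ℝ in (𝓝 z) ×ˢ (𝓝[>] (0:ℝ)), -‖v‖ ≤ (‖p.1 + p.2 • v‖ - ‖p.1‖) / p.2 := by
  filter_upwards [(eventually_mem_nhdsWithin.filter_mono
    (Filter.tendsto_snd : Filter.Tendsto (Prod.snd) ((𝓝 z) ×ˢ (𝓝[>] (0:ℝ))) (𝓝[>] 0)))]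
    with p (ht : (0:ℝ) < p.2)
  rw [le_div_iff₀ ht]
  have h1 : ‖p.1‖ ≤ ‖p.1 + p.2 • v‖ + ‖p.2 • v‖ := by
    simpa using norm_sub_le (p.1 + p.2 • v) (p.2 • v)
  rw [norm_smul, Real.norm_eq_abs, abs_of_pos ht] at h1
  nlinarith

private lemma clarkeDeriv_norm_le (z v : Y) : clarkeDeriv (fun w : Y => ‖w‖) z v ≤ ‖v‖ := by
  refine limsup_le_of_bounds' (norm_quot_lb z v) ?_
  filter_upwards [(eventually_mem_nhdsWithin.filter_mono
    (Filter.tendsto_snd : Filter.Tendsto (Prod.snd) ((𝓝 z) ×ˢ (𝓝[>] (0:ℝ))) (𝓝[>] 0)))]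
    with p (ht : (0:ℝ) < p.2)
  rw [div_le_iff₀ ht]
  have h1 : ‖p.1 + p.2 • v‖ ≤ ‖p.1‖ + ‖p.2 • v‖ := norm_add_le _ _
  rw [norm_smul, Real.norm_eq_abs, abs_of_pos ht] at h1
  nlinarith

private lemma clarkeDeriv_norm_neg_self {z : Y} :
    clarkeDeriv (fun w : Y => ‖w‖) z (-z) ≤ -‖z‖ := by
  refine le_of_forall_pos_le_add fun ε hε => ?_
  refine Filter.limsup_le_of_le (Filter.isCoboundedUnder_le_of_eventually_le _
    ((norm_quot_lb z (-z)).mono fun p hp => by simpa using hp)) ?_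
  have h1 : ∀ᶠ w in 𝓝 z, w ∈ ball z (ε/2) := ball_mem_nhds z (by positivity)
  have h2 : ∀ᶠ t in 𝓝[>] (0:ℝ), t ∈ Ioo 0 1 := Ioo_mem_nhdsGT_of_mem ⟨le_rfl, one_pos⟩
  filter_upwards [h1.prod_inl _, h2.prod_inr _] with p hw ⟨ht0, ht1⟩
  rw [div_le_iff₀ ht0]
  have key : p.1 + p.2 • (-z) = (1 - p.2) • p.1 + p.2 • (p.1 - z) := by
    rw [sub_smul, one_smul, smul_sub, smul_neg]; abel
  have h3 : ‖p.1 + p.2 • (-z)‖ ≤ (1 - p.2) * ‖p.1‖ + p.2 * ‖p.1 - z‖ := by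
    rw [key]
    refine (norm_add_le _ _).trans ?_
    rw [norm_smul, norm_smul, Real.norm_eq_abs, Real.norm_eq_abs,
      abs_of_nonneg (by linarith : (0:ℝ) ≤ 1 - p.2), abs_of_pos ht0]
  have h4 : ‖z‖ - ‖p.1‖ ≤ ‖p.1 - z‖ := by
    have := norm_sub_norm_le z p.1
    rw [norm_sub_rev] at this
    linarith
  have h5 : ‖p.1 - z‖ < ε/2 := by rw [mem_ball, dist_eq_norm] at hw; exact hw
  nlinarith [norm_nonneg p.1, norm_nonneg (p.1 - z)]

private lemma norm_eq_one_of_mem_subdiff {z : Y} (hz : z ≠ 0)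
    {y' : StrongDual ℝ Y} (hy' : y' ∈ clarkeSubdiff (fun w : Y => ‖w‖) z) :
    ‖y'‖ = 1 := by
  have hub : ∀ v, y' v ≤ ‖v‖ := fun v => (hy' v).trans (clarkeDeriv_norm_le z v)
  have hle : ‖y'‖ ≤ 1 := by
    refine ContinuousLinearMap.opNorm_le_bound _ zero_le_one fun v => ?_
    rw [Real.norm_eq_abs, abs_le, one_mul]
    refine ⟨?_, hub v⟩
    have := hub (-v)
    rw [map_neg, norm_neg] at this
    linarith
  have hball : ‖z‖ ≤ y' z := by
    have := (hy' (-z)).trans clarkeDeriv_norm_neg_self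
    rw [map_neg] at this
    linarith
  have hz0 : 0 < ‖z‖ := norm_pos_iff.mpr hz
  have h6 := y'.le_opNorm z
  rw [Real.norm_eq_abs] at h6
  have : ‖z‖ ≤ ‖y'‖ * ‖z‖ := hball.trans ((le_abs_self _).trans h6)
  nlinarith


private lemma banachC_nonneg (T : X →L[ℝ] Y) : 0 ≤ banachC T :=
  Real.sInf_nonneg (by rintro b ⟨y', -, rfl⟩; exact norm_nonneg _)

private lemma banachC_le_of_unit {T : X →L[ℝ] Y} {y' : StrongDual ℝ Y} (h : ‖y'‖ = 1) :
    banachC T ≤ ‖y'.comp T‖ :=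
  csInf_le ⟨0, by rintro b ⟨w, -, rfl⟩; exact norm_nonneg _⟩ ⟨y', h, rfl⟩

private lemma banachC_lip (hne : ∃ y' : StrongDual ℝ Y, ‖y'‖ = 1) (T S : X →L[ℝ] Y) :
    banachC T ≤ banachC S + ‖T - S‖ := by
  obtain ⟨y₀, hy₀⟩ := hne
  have key : ∀ y' : StrongDual ℝ Y, ‖y'‖ = 1 →
      banachC T - ‖T - S‖ ≤ ‖y'.comp S‖ := by
    intro y' hy'
    have h1 : banachC T ≤ ‖y'.comp T‖ := banachC_le_of_unit hy'
    have h2 : ‖y'.comp T‖ ≤ ‖y'.comp S‖ + ‖T - S‖ := by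
      have h3 : ‖y'.comp T - y'.comp S‖ ≤ ‖T - S‖ := by
        have : y'.comp T - y'.comp S = y'.comp (T - S) := by
          ext v; simp
        rw [this]
        calc ‖y'.comp (T - S)‖ ≤ ‖y'‖ * ‖T - S‖ := y'.opNorm_comp_le _
          _ = ‖T - S‖ := by rw [hy', one_mul]
      have := norm_sub_norm_le (y'.comp T) (y'.comp S)
      linarith
    linarith
  have : banachC T - ‖T - S‖ ≤ banachC S := by
    refine le_csInf ⟨_, ⟨y₀, hy₀, rfl⟩⟩ ?_
    rintro b ⟨y', hy', rfl⟩
    exact key y' hy'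
  linarith

private lemma le_banachC_closure (hne : ∃ y' : StrongDual ℝ Y, ‖y'‖ = 1)
    {A : Set (X →L[ℝ] Y)} {c : ℝ} (h : ∀ S ∈ A, c ≤ banachC S)
    {T : X →L[ℝ] Y} (hT : T ∈ closure A) : c ≤ banachC T := by
  refine le_of_forall_pos_le_add fun ε hε => ?_
  obtain ⟨S, hS, hdist⟩ := Metric.mem_closure_iff.mp hT ε hε
  have h1 : banachC S ≤ banachC T + ‖S - T‖ := banachC_lip hne S T
  have h2 : ‖S - T‖ < ε := by rw [dist_eq_norm] at hdist; rw [norm_sub_rev]; exact hdist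
  have := h S hS
  linarith


/-- If `f : X → Y` is locally Lipschitz with a pseudo-Jacobian mapping `Jf` satisfying the
strong chain rule condition on `X`, `Jf` is regular at `x` and `f(x) ≠ y`, then
`λ_{F_y}(x) ≥ reg Jf(x) > 0`; consequently if `λ_{F_y}(x) = 0` then `f(x) = y`. -/
theorem lambda_ge_reg {X Y : Type*}
    [NormedAddCommGroup X] [NormedSpace ℝ X] [CompleteSpace X]
    [NormedAddCommGroup Y] [NormedSpace ℝ Y] [CompleteSpace Y]
    (f : X → Y) (hf : LocallyLipschitz f)
    (Jf : X → Set (X →L[ℝ] Y)) (hJf : ∀ x : X, IsPseudoJacobianAt f x (Jf x))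
    (hscr : StrongChainRuleCond f Jf Set.univ)
    (y : Y) (x : X) (hreg : RegularAt Jf x) :
    (f x ≠ y → regJ Jf x ≤ lambdaF (fun z : X => ‖f z - y‖) x ∧ 0 < regJ Jf x) ∧
    (lambdaF (fun z : X => ‖f z - y‖) x = 0 → f x = y) := by
  obtain ⟨hiso, hsi, hpos⟩ := hreg
  have main : f x ≠ y → regJ Jf x ≤ lambdaF (fun z : X => ‖f z - y‖) x ∧ 0 < regJ Jf x := by
    intro hne
    refine ⟨?_, hpos⟩
    have hz : f x - y ≠ 0 := sub_ne_zero.mpr hne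
    obtain ⟨y₀, hy₀, -⟩ := exists_dual_vector ℝ (f x - y) (norm_ne_zero_iff.mpr hz)
    have hunit : ∃ y' : StrongDual ℝ Y, ‖y'‖ = 1 := ⟨y₀, hy₀⟩
    have hFlip : ∃ K : NNReal, ∃ δ > (0:ℝ),
        LipschitzOnWith K (fun z : X => ‖f z - y‖) (ball x δ) := by
      obtain ⟨K, t, ht, hK⟩ := hf x
      obtain ⟨δ, hδ, hball⟩ := Metric.mem_nhds_iff.mp ht
      refine ⟨K, δ, hδ, LipschitzOnWith.of_dist_le_mul fun a ha b hb => ?_⟩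
      have h1 : dist ‖f a - y‖ ‖f b - y‖ ≤ dist (f a) (f b) := by
        rw [Real.dist_eq, dist_eq_norm]
        have := abs_norm_sub_norm_le (f a - y) (f b - y)
        have he : f a - y - (f b - y) = f a - f b := by abel
        rw [he] at this
        exact this
      exact h1.trans (hK.dist_le_mul a (hball ha) b (hball hb))
    obtain ⟨g, hg⟩ := clarke_sub_exists hFlip
    rw [lambdaF]
    refine le_csInf ⟨‖g‖, mem_image_of_mem _ hg⟩ ?_
    rintro b ⟨w, hw, rfl⟩
    have hwD : w ∈ DeltaF f Jf y x := hscr.2.2 x (mem_univ x) y (Ne.symm hne) hw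
    obtain ⟨y', hy', T, hT, rfl⟩ := hwD
    have hy1 : ‖y'‖ = 1 := norm_eq_one_of_mem_subdiff hz hy'
    refine le_trans ?_ (banachC_le_of_unit hy1)
    show regJ Jf x ≤ banachC T
    rw [regJ, surJ]
    refine Real.sSup_le ?_ (banachC_nonneg T)
    rintro c ⟨r, hr, rfl⟩
    refine le_banachC_closure hunit ?_ hT
    intro S hS
    have hsub : S ∈ convexHull ℝ (⋃ z ∈ ball x r, Jf z) := by
      refine convexHull_mono ?_ hS
      intro T' hT'
      exact mem_biUnion (mem_ball_self hr) hT'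
    exact csInf_le ⟨0, by rintro b ⟨S', -, rfl⟩; exact banachC_nonneg S'⟩ ⟨S, hsub, rfl⟩
  refine ⟨main, fun hl => ?_⟩
  by_contra hne
  obtain ⟨h1, h2⟩ := main hne
  rw [hl] at h1
  linarith
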